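/- Let 𝔮 be a Lie algebra over ℝ carrying a topology making it a topological vector space such that the Lie bracket ⁅·,·⁆ : 𝔮 × 𝔮 → 𝔮 is continuous, and let S ⊆ 𝔮 be a subset. With SP₁(S) := span_ℝ(S), SP_{n+1}(S) := span_ℝ{ ⁅x,y⁆ : x ∈ SP₁(S), y ∈ SP_n(S) }, and C̄SP_n(S) the topological closure of SP_n(S), one has, for all m, n ≥ 1: span_ℝ{ ⁅x,y⁆ : x ∈ C̄SP_m(S), y ∈ C̄SP_n(S) } ⊆ C̄SP_{m+n}(S). -/

import Mathlib

/-- `SP K S n` is the submodule `SP_{n+1}(S)` of the paper: `SP K S 0 = span K S`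
and `SP K S (n+1) = span K { ⁅x,y⁆ | x ∈ span K S, y ∈ SP K S n }`. -/
def SP (K : Type*) {L : Type*} [Field K] [LieRing L] [LieAlgebra K L]
    (S : Set L) : ℕ → Submodule K L
  | 0 => Submodule.span K S
  | n + 1 =>
      Submodule.span K
        {z : L | ∃ x ∈ Submodule.span K S, ∃ y ∈ SP K S n, z = ⁅x, y⁆}

lemma SP_bracket_mem {K L : Type*} [Field K] [LieRing L] [LieAlgebra K L]
    (S : Set L) : ∀ m n : ℕ, ∀ x ∈ SP K S m, ∀ y ∈ SP K S n,
    ⁅x, y⁆ ∈ SP K S (m + n + 1) := by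
  intro m
  induction m with
  | zero =>
      intro n x hx y hy
      rw [Nat.zero_add]
      exact Submodule.subset_span ⟨x, hx, y, hy, rfl⟩
  | succ m ih =>
      intro n x hx y hy
      have harith : m + 1 + n + 1 = m + n + 1 + 1 := by omega
      rw [harith]
      refine Submodule.span_induction ?_ ?_ ?_ ?_ hx
      · rintro z ⟨a, ha, b, hb, rfl⟩
        rw [lie_lie]
        refine sub_mem ?_ ?_
        · exact Submodule.subset_span ⟨a, ha, _, ih n b hb y hy, rfl⟩
        · have hay : ⁅a, y⁆ ∈ SP K S (n + 1) :=
            Submodule.subset_span ⟨a, ha, y, hy, rfl⟩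
          have := ih (n + 1) b hb _ hay
          rwa [show m + (n + 1) + 1 = m + n + 1 + 1 by omega] at this
      · rw [zero_lie]; exact zero_mem _
      · intro u v _ _ hu hv
        rw [add_lie]; exact add_mem hu hv
      · intro c u _ hu
        rw [smul_lie]; exact Submodule.smul_mem _ c hu

/-- For a real topological Lie algebra with continuous bracket and all `m, n ≥ 1`
(encoded by the index shift `SP ℝ S m = SP_{m+1}(S)`),
`span_ℝ { ⁅x,y⁆ | x ∈ closure (SP_m(S)), y ∈ closure (SP_n(S)) } ⊆ closure (SP_{m+n}(S))`. -/
theorem span_bracket_closure_SP_le (L : Type*) [LieRing L] [LieAlgebra ℝ L]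
    [TopologicalSpace L] [IsTopologicalAddGroup L] [ContinuousSMul ℝ L]
    (hbr : Continuous fun p : L × L => ⁅p.1, p.2⁆)
    (S : Set L) (m n : ℕ) :
    Submodule.span ℝ
        {z : L | ∃ x ∈ closure (SP ℝ S m : Set L),
            ∃ y ∈ closure (SP ℝ S n : Set L), z = ⁅x, y⁆}
      ≤ (SP ℝ S (m + n + 1)).topologicalClosure := by
  rw [Submodule.span_le]
  rintro z ⟨x, hx, y, hy, rfl⟩
  show ⁅x, y⁆ ∈ closure (SP ℝ S (m + n + 1) : Set L)
  -- Step 1: for y' ∈ SP n, x ∈ closure (SP m), the bracket is in the closure.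
  have step1 : ∀ y' ∈ (SP ℝ S n : Set L),
      ⁅x, y'⁆ ∈ closure (SP ℝ S (m + n + 1) : Set L) := by
    intro y' hy'
    have hcont : Continuous fun a : L => ⁅a, y'⁆ :=
      hbr.comp (continuous_id.prodMk continuous_const)
    have := map_mem_closure (f := fun a : L => ⁅a, y'⁆) hcont hx
      (fun a ha => SP_bracket_mem S m n a ha y' hy')
    exact this
  have hcont2 : Continuous fun b : L => ⁅x, b⁆ :=
    hbr.comp (continuous_const.prodMk continuous_id)
  have := map_mem_closure hcont2 hy step1
  rwa [closure_closure] at this
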